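/- Let G be a graph and g, f integer-valued functions on V(G) with g(v) ≡ f(v) (mod 2) for all v. Suppose for disjoint S, T ⊆ V(G) the quantity η(S,T) = f(S) − g(T) + Σ_{x∈T} d_{G−S}(x) − q(S,T) satisfies η(S,T) ≤ −2, where q(S,T) counts components C of G−S−T with g(V(C)) + e_G(V(C),T) odd, and suppose f(v) ≤ d_G(v) for some v ∈ S. Then for S' = S − v, η(S',T) ≤ η(S,T) + (d_G(v) − f(v)). -/

import Mathlib

open scoped Classical

/-- Degree of `x` in `G - S`, i.e. the number of neighbors of `x` outside `S`. -/
noncomputable def degOutside {V : Type*} [Fintype V] (G : SimpleGraph V) (S : Finset V) (x : V) : ℕ :=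
  ((G.neighborFinset x) \ S).card

/-- The vertex set (as a finset of `V`) of a connected component of the subgraph of `G`
induced on `W`. -/
noncomputable def compSupp {V : Type*} [Fintype V] (G : SimpleGraph V) (W : Set V)
    (c : (G.induce W).ConnectedComponent) : Finset V :=
  Finset.univ.filter fun v => ∃ h : v ∈ W, (G.induce W).connectedComponentMk ⟨v, h⟩ = c

/-- `eBetween G U T` is the number of edges of `G` joining `U` to `T`
(counted as pairs `(t, u)` with `t ∈ T`, `u ∈ U`, `t ~ u`). -/
noncomputable def eBetween {V : Type*} [Fintype V] (G : SimpleGraph V) (U T : Finset V) : ℕ :=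
  ∑ t ∈ T, ((G.neighborFinset t).filter (· ∈ U)).card

/-- `qOdd G g S T` is the number of components `C` of `G - S - T` with
`g(V(C)) + e_G(V(C), T)` odd. -/
noncomputable def qOdd {V : Type*} [Fintype V] (G : SimpleGraph V) (g : V → ℤ)
    (S T : Finset V) : ℕ :=
  Nat.card {c : (G.induce ((↑(S ∪ T) : Set V)ᶜ)).ConnectedComponent //
    Odd ((∑ x ∈ compSupp G ((↑(S ∪ T) : Set V)ᶜ) c, g x) +
      (eBetween G (compSupp G ((↑(S ∪ T) : Set V)ᶜ) c) T : ℤ))}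

/-- `eta G g f S T = f(S) - g(T) + Σ_{x ∈ T} d_{G-S}(x) - q(S,T)`. -/
noncomputable def eta {V : Type*} [Fintype V] (G : SimpleGraph V) (g f : V → ℤ)
    (S T : Finset V) : ℤ :=
  (∑ x ∈ S, f x) - (∑ x ∈ T, g x) + (∑ x ∈ T, (degOutside G S x : ℤ)) - qOdd G g S T

lemma walk_lemma {V : Type*} (G : SimpleGraph V) (W : Set V) (v : V) (hv : v ∉ W) :
    ∀ {a b : ↥(insert v W)} (p : (G.induce (insert v W)).Walk a b) (hb : (b:V) ∈ W),
      ((ha : (a:V) ∈ W) → (G.induce W).Reachable ⟨a,ha⟩ ⟨b,hb⟩ ∨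
        ((∃ (ha' : (a:V) ∈ W) (u : V) (hu : u ∈ W), G.Adj v u ∧ (G.induce W).Reachable ⟨a,ha'⟩ ⟨u,hu⟩) ∧
         (∃ (hb' : (b:V) ∈ W) (u : V) (hu : u ∈ W), G.Adj v u ∧ (G.induce W).Reachable ⟨b,hb'⟩ ⟨u,hu⟩))) ∧
      ((a:V) = v → (∃ (hb' : (b:V) ∈ W) (u : V) (hu : u ∈ W), G.Adj v u ∧ (G.induce W).Reachable ⟨b,hb'⟩ ⟨u,hu⟩)) := by
  intro a b p
  induction p with
  | nil =>
    intro hb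
    exact ⟨fun ha => Or.inl (by rfl), fun hav => absurd (hav ▸ hb) hv⟩
  | @cons x z y h q ih =>
    intro hb
    have hadj : G.Adj x z := by simpa using h
    by_cases hz : (z:V) ∈ W
    · obtain ⟨IH1, _⟩ := ih hb
      constructor
      · intro ha
        have hxz : (G.induce W).Adj ⟨x,ha⟩ ⟨z,hz⟩ := by simpa using hadj
        rcases IH1 hz with hr | ⟨⟨hz', u, hu, hvu, hru⟩, Py⟩
        · exact Or.inl (hxz.reachable.trans hr)
        · exact Or.inr ⟨⟨ha, u, hu, hvu, hxz.reachable.trans hru⟩, Py⟩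
      · intro hxv
        have hvz : G.Adj v z := by simpa only [hxv] using hadj
        rcases IH1 hz with hr | ⟨_, Py⟩
        · exact ⟨hb, z, hz, hvz, hr.symm⟩
        · exact Py
    · have hzv : (z:V) = v := by
        rcases z.2 with h' | h'
        · exact h'
        · exact absurd h' hz
      constructor
      · intro ha
        have hxv : G.Adj (x:V) v := by simpa only [hzv] using hadj
        exact Or.inr ⟨⟨ha, x, ha, hxv.symm, by rfl⟩, (ih hb).2 hzv⟩
      · intro hxv
        exact absurd hadj (by simp [hxv, hzv])

lemma supp_eq {V : Type*} [Fintype V] (G : SimpleGraph V) (W : Set V) (v : V) (hv : v ∉ W)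
    (c : (G.induce W).ConnectedComponent)
    (hP : ¬ ∃ u, ∃ hu : u ∈ W, G.Adj v u ∧ (G.induce W).connectedComponentMk ⟨u,hu⟩ = c) :
    compSupp G (insert v W)
      (c.map (SimpleGraph.induceHom SimpleGraph.Hom.id (fun x hx => Set.mem_insert_of_mem v hx))) =
    compSupp G W c := by
  obtain ⟨⟨x₀, hx₀⟩, hmk'⟩ := c.exists_rep
  have hmk : (G.induce W).connectedComponentMk ⟨x₀,hx₀⟩ = c := hmk'
  ext u
  simp only [compSupp, Finset.mem_filter, Finset.mem_univ, true_and]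
  constructor
  · rintro ⟨hu', hmku⟩
    -- hmku : mk ⟨u,hu'⟩ = c.map φ
    rw [← hmk, SimpleGraph.ConnectedComponent.map_mk] at hmku
    have hreach := SimpleGraph.ConnectedComponent.exact hmku
    obtain ⟨p⟩ := hreach
    have hx₀W : ((⟨x₀, Set.mem_insert_of_mem v hx₀⟩ : ↥(insert v W)) : V) ∈ W := hx₀
    have key := walk_lemma G W v hv p hx₀W
    rcases hu' with h' | huW
    · exact absurd (key.2 h') (by
        rintro ⟨hb', w, hw, hvw, hrw⟩
        exact hP ⟨w, hw, hvw, (SimpleGraph.ConnectedComponent.sound hrw.symm).trans hmk⟩)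
    · rcases key.1 huW with hr | ⟨_, ⟨hb', w, hw, hvw, hrw⟩⟩
      · exact ⟨huW, (SimpleGraph.ConnectedComponent.sound hr).trans hmk⟩
      · exact absurd ⟨w, hw, hvw, (SimpleGraph.ConnectedComponent.sound hrw.symm).trans hmk⟩ hP
  · rintro ⟨hu, hmku⟩
    refine ⟨Set.mem_insert_of_mem v hu, ?_⟩
    rw [← hmk] at hmku
    have hreach := SimpleGraph.ConnectedComponent.exact hmku
    have hreach' := hreach.map (SimpleGraph.induceHom SimpleGraph.Hom.id
      (fun x hx => Set.mem_insert_of_mem v hx))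
    rw [← hmk, SimpleGraph.ConnectedComponent.map_mk]
    exact SimpleGraph.ConnectedComponent.sound hreach'

lemma count_bound {V : Type*} [Fintype V] (G : SimpleGraph V) (g : V → ℤ) (T : Finset V)
    (W : Set V) (v : V) (hv : v ∉ W) :
    Nat.card {c : (G.induce W).ConnectedComponent //
      Odd ((∑ x ∈ compSupp G W c, g x) + (eBetween G (compSupp G W c) T : ℤ))} ≤
    Nat.card {c : (G.induce (insert v W)).ConnectedComponent //
      Odd ((∑ x ∈ compSupp G (insert v W) c, g x) +
        (eBetween G (compSupp G (insert v W) c) T : ℤ))} +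
    ((G.neighborFinset v).filter (· ∈ W)).card := by
  classical
  set φ : G.induce W →g G.induce (insert v W) :=
    SimpleGraph.induceHom SimpleGraph.Hom.id (fun x hx => Set.mem_insert_of_mem v hx) with hφ
  set Padj : (G.induce W).ConnectedComponent → Prop :=
    fun c => ∃ u, ∃ hu : u ∈ W, G.Adj v u ∧ (G.induce W).connectedComponentMk ⟨u,hu⟩ = c with hPadj
  rw [Nat.card_eq_fintype_card, Fintype.card_subtype, Nat.card_eq_fintype_card,
    Fintype.card_subtype]
  set OddP : (G.induce W).ConnectedComponent → Prop :=
    fun c => Odd ((∑ x ∈ compSupp G W c, g x) + (eBetween G (compSupp G W c) T : ℤ)) with hOddP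
  set OddP' : (G.induce (insert v W)).ConnectedComponent → Prop :=
    fun c => Odd ((∑ x ∈ compSupp G (insert v W) c, g x) +
      (eBetween G (compSupp G (insert v W) c) T : ℤ)) with hOddP'
  have hgoal : (Finset.univ.filter OddP).card ≤ (Finset.univ.filter OddP').card +
      ((G.neighborFinset v).filter (· ∈ W)).card := by
    have hsplit : (Finset.univ.filter OddP).card ≤
        (Finset.univ.filter (fun c => OddP c ∧ ¬ Padj c)).card +
        (Finset.univ.filter (fun c => OddP c ∧ Padj c)).card := by
      have hsub : Finset.univ.filter OddP ⊆
          (Finset.univ.filter (fun c => OddP c ∧ ¬ Padj c)) ∪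
          (Finset.univ.filter (fun c => OddP c ∧ Padj c)) := by
        intro c hc
        simp only [Finset.mem_filter, Finset.mem_univ, true_and, Finset.mem_union] at hc ⊢
        by_cases h : Padj c
        · exact Or.inr ⟨hc, h⟩
        · exact Or.inl ⟨hc, h⟩
      exact (Finset.card_le_card hsub).trans (Finset.card_union_le _ _)
    have hB : (Finset.univ.filter (fun c => OddP c ∧ ¬ Padj c)).card ≤
        (Finset.univ.filter OddP').card := by
      apply Finset.card_le_card_of_injOn (fun c => c.map φ)
      · intro c hc
        simp only [Finset.mem_coe, Finset.mem_filter, Finset.mem_univ, true_and] at hc ⊢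
        have hs := supp_eq G W v hv c hc.2
        rw [← hφ] at hs
        have hodd : Odd ((∑ x ∈ compSupp G (insert v W) (c.map φ), g x) +
            (eBetween G (compSupp G (insert v W) (c.map φ)) T : ℤ)) := by
          rw [hs]; exact hc.1
        exact hodd
      · intro c₁ hc₁ c₂ hc₂ heq
        simp only [Finset.coe_filter, Set.mem_setOf_eq, Finset.mem_univ, true_and] at hc₁ hc₂
        have hs₁ := supp_eq G W v hv c₁ hc₁.2
        have hs₂ := supp_eq G W v hv c₂ hc₂.2
        rw [← hφ] at hs₁ hs₂
        have heq' : c₁.map φ = c₂.map φ := heq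
        have hsupp : compSupp G W c₁ = compSupp G W c₂ := by
          rw [← hs₁, ← hs₂, heq']
        obtain ⟨⟨x₁, hx₁⟩, hmk'⟩ := c₁.exists_rep
        have hmk : (G.induce W).connectedComponentMk ⟨x₁,hx₁⟩ = c₁ := hmk'
        have hx₁mem : x₁ ∈ compSupp G W c₁ := by
          simp only [compSupp, Finset.mem_filter, Finset.mem_univ, true_and]
          exact ⟨hx₁, hmk⟩
        rw [hsupp] at hx₁mem
        simp only [compSupp, Finset.mem_filter, Finset.mem_univ, true_and] at hx₁mem
        obtain ⟨h₁, h₂⟩ := hx₁mem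
        rw [← hmk, ← h₂]
    have hA : (Finset.univ.filter (fun c => OddP c ∧ Padj c)).card ≤
        ((G.neighborFinset v).filter (· ∈ W)).card := by
      apply Finset.card_le_card_of_injOn (fun c => if h : Padj c then h.choose else v)
      · intro c hc
        simp only [Finset.mem_coe, Finset.mem_filter, Finset.mem_univ, true_and] at hc ⊢
        rw [dif_pos hc.2]
        obtain ⟨hu, hadj, _⟩ := hc.2.choose_spec
        simp only [Finset.mem_coe, Finset.mem_filter, SimpleGraph.mem_neighborFinset]
        exact ⟨hadj, hu⟩
      · intro c₁ hc₁ c₂ hc₂ heq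
        simp only [Finset.coe_filter, Set.mem_setOf_eq, Finset.mem_univ, true_and] at hc₁ hc₂
        have heq' : (if h : Padj c₁ then h.choose else v) = (if h : Padj c₂ then h.choose else v) := heq
        rw [dif_pos hc₁.2, dif_pos hc₂.2] at heq'
        obtain ⟨hu₁, hadj₁, hmk₁⟩ := hc₁.2.choose_spec
        obtain ⟨hu₂, hadj₂, hmk₂⟩ := hc₂.2.choose_spec
        rw [← hmk₁, ← hmk₂]
        congr 1
        exact Subtype.ext heq'
    omega
  convert hgoal using 3

theorem eta_erase_bound {V : Type*} [Fintype V] (G : SimpleGraph V) (g f : V → ℤ)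
    (hpar : ∀ u : V, g u % 2 = f u % 2)
    (S T : Finset V) (hST : Disjoint S T)
    (v : V) (hv : v ∈ S) (hfv : f v ≤ G.degree v)
    (heta : eta G g f S T ≤ -2) :
    eta G g f (S.erase v) T ≤ eta G g f S T + ((G.degree v : ℤ) - f v) := by
  classical
  have hvT : v ∉ T := fun h => (Finset.disjoint_left.mp hST hv) h
  set W : Set V := (↑(S ∪ T) : Set V)ᶜ with hW
  have hvW : v ∉ W := by
    simp only [hW, Set.mem_compl_iff, Finset.coe_union, Set.mem_union, Finset.mem_coe, not_not]
    exact Or.inl hv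
  have hset : (↑(S.erase v ∪ T) : Set V)ᶜ = insert v W := by
    ext x
    simp only [hW, Set.mem_compl_iff, Finset.coe_union, Set.mem_union, Finset.mem_coe,
      Finset.mem_erase, Set.mem_insert_iff]
    by_cases hx : x = v
    · subst hx; simp [hvT]
    · tauto
  -- q bound
  have hq : qOdd G g S T ≤ qOdd G g (S.erase v) T +
      ((G.neighborFinset v).filter (· ∈ W)).card := by
    have h2 : qOdd G g (S.erase v) T =
        Nat.card {c : (G.induce (insert v W)).ConnectedComponent //
          Odd ((∑ x ∈ compSupp G (insert v W) c, g x) +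
            (eBetween G (compSupp G (insert v W) c) T : ℤ))} := by
      rw [qOdd]
      congr 1
      rw [hset]
    rw [h2]
    convert count_bound G g T W v hvW using 3
    · rfl
    ext x
    simp
  -- degree sums
  have hdeg : ∀ x, degOutside G (S.erase v) x =
      degOutside G S x + (if G.Adj x v then 1 else 0) := by
    intro x
    rw [degOutside, degOutside]
    by_cases hadj : G.Adj x v
    · have hvx : v ∈ G.neighborFinset x := by
        rw [SimpleGraph.mem_neighborFinset]; exact hadj
      have hins : G.neighborFinset x \ S.erase v = insert v (G.neighborFinset x \ S) := by
        ext y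
        simp only [Finset.mem_sdiff, Finset.mem_erase, Finset.mem_insert]
        by_cases hy : y = v
        · subst hy; simp [hvx]
        · tauto
      rw [hins, Finset.card_insert_of_notMem (by simp [hv]), if_pos hadj]
    · have hins : G.neighborFinset x \ S.erase v = G.neighborFinset x \ S := by
        ext y
        simp only [Finset.mem_sdiff, Finset.mem_erase]
        constructor
        · rintro ⟨h1, h2⟩
          refine ⟨h1, fun hyS => h2 ⟨fun hyv => ?_, hyS⟩⟩
          subst hyv
          exact hadj (by rwa [← SimpleGraph.mem_neighborFinset])
        · rintro ⟨h1, h2⟩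
          exact ⟨h1, fun h3 => h2 h3.2⟩
      rw [hins, if_neg hadj, Nat.add_zero]
  have hsumdeg : (∑ x ∈ T, (degOutside G (S.erase v) x : ℤ)) =
      (∑ x ∈ T, (degOutside G S x : ℤ)) +
      ((T.filter (fun x => G.Adj x v)).card : ℤ) := by
    have : ∀ x ∈ T, (degOutside G (S.erase v) x : ℤ) =
        (degOutside G S x : ℤ) + (if G.Adj x v then 1 else 0) := by
      intro x _
      rw [hdeg x]
      push_cast
      split <;> simp
    rw [Finset.sum_congr rfl this, Finset.sum_add_distrib]
    congr 1
    simp [Finset.sum_boole]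
  -- A + B ≤ degree
  have hAB : ((G.neighborFinset v).filter (· ∈ W)).card +
      (T.filter (fun x => G.Adj x v)).card ≤ G.degree v := by
    have hTf : T.filter (fun x => G.Adj x v) = (G.neighborFinset v).filter (· ∈ T) := by
      ext x
      simp only [Finset.mem_filter, SimpleGraph.mem_neighborFinset]
      rw [G.adj_comm]
      tauto
    rw [hTf]
    rw [← Finset.card_union_of_disjoint]
    · apply le_trans (Finset.card_le_card _) (le_of_eq (G.card_neighborFinset_eq_degree v))
      intro x hx
      simp only [Finset.mem_union, Finset.mem_filter] at hx
      rcases hx with h | h <;> exact h.1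
    · rw [Finset.disjoint_filter]
      intro x _ hxW
      simp only [hW, Set.mem_compl_iff, Finset.coe_union, Set.mem_union, Finset.mem_coe] at hxW
      exact fun hxT => hxW (Or.inr hxT)
  -- sum over erase
  have hsum : (∑ x ∈ S.erase v, f x) = (∑ x ∈ S, f x) - f v := by
    rw [← Finset.sum_erase_add S f hv]
    ring
  rw [eta, eta, hsum, hsumdeg]
  have hq' : (qOdd G g S T : ℤ) ≤ (qOdd G g (S.erase v) T : ℤ) +
      (((G.neighborFinset v).filter (· ∈ W)).card : ℤ) := by exact_mod_cast hq
  have hAB' : (((G.neighborFinset v).filter (· ∈ W)).card : ℤ) +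
      ((T.filter (fun x => G.Adj x v)).card : ℤ) ≤ (G.degree v : ℤ) := by exact_mod_cast hAB
  linarith
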